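/- Let F be a quasi-linear map on a normed space E and X_F = ℝ × E with quasi-norm ‖(r,x)‖ = |r - F(x)| + ‖x‖. The sets {(r,x) : ‖x‖ < ε}, ε > 0, form a neighborhood base at 0 for a nearly convex vector topology on ℝ × E which is weaker than the quasi-norm topology, and the closure of {0} in this topology equals ℝ × {0}. -/

import Mathlib

open Filter Topology

theorem tube_base_nearly_convex_topology
    {E : Type*} [NormedAddCommGroup E] [NormedSpace ℝ E]
    (F : E → ℝ) (C : ℝ)
    (hhom : ∀ (r : ℝ) (x : E), F (r • x) = r * F x)
    (hq : ∀ x y : E, |F (x + y) - F x - F y| ≤ C * (‖x‖ + ‖y‖))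
    -- τ is the quasi-norm topology of ‖(r,x)‖_F = |r - F x| + ‖x‖ :
    (τ : TopologicalSpace (ℝ × E))
    (hτadd : @IsTopologicalAddGroup (ℝ × E) τ _)
    (hτsmul : @ContinuousSMul ℝ (ℝ × E) _ _ τ)
    (hτbasis : (@nhds (ℝ × E) τ 0).HasBasis (fun ε : ℝ => 0 < ε)
      (fun ε => {p : ℝ × E | |p.1 - F p.2| + ‖p.2‖ < ε})) :
    ∃ ν : TopologicalSpace (ℝ × E),
      @IsTopologicalAddGroup (ℝ × E) ν _ ∧
      @ContinuousSMul ℝ (ℝ × E) _ _ ν ∧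
      -- the tubes {(r,x) : ‖x‖ < ε} are a neighborhood base at 0 for ν :
      (@nhds (ℝ × E) ν 0).HasBasis (fun ε : ℝ => 0 < ε)
        (fun ε => {p : ℝ × E | ‖p.2‖ < ε}) ∧
      -- ν is weaker than the quasi-norm topology :
      τ ≤ ν ∧
      -- ν is nearly convex :
      (∀ p : ℝ × E, p ∉ @closure (ℝ × E) ν {0} →
        ∃ f : (ℝ × E) →ₗ[ℝ] ℝ, @Continuous (ℝ × E) ℝ ν _ f ∧ f p ≠ 0) ∧
      -- the ν-closure of {0} is ℝ × {0} :
      @closure (ℝ × E) ν {0} = {p : ℝ × E | p.2 = 0} := by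
  classical
  set ν : TopologicalSpace (ℝ × E) :=
    TopologicalSpace.induced (Prod.snd : ℝ × E → E) inferInstance with hν
  have hInd : @Topology.IsInducing (ℝ × E) E ν _ Prod.snd := @Topology.IsInducing.mk _ _ ν _ _ hν
  have hsndCont : @Continuous (ℝ × E) E ν _ Prod.snd := continuous_induced_dom
  have hadd : @IsTopologicalAddGroup (ℝ × E) ν _ :=
    topologicalAddGroup_induced (AddMonoidHom.snd ℝ E)
  have hsmul : @ContinuousSMul ℝ (ℝ × E) _ _ ν :=
by
    letI := ν
    exact hInd.continuousSMul (f := (id : ℝ → ℝ)) continuous_id rfl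
  -- closure of {0}
  have hclos : @closure (ℝ × E) ν {0} = {p : ℝ × E | p.2 = 0} := by
    ext p
    have : p ∈ @closure (ℝ × E) ν {0} ↔ p.2 ∈ closure (Prod.snd '' ({0} : Set (ℝ × E))) :=
      closure_induced
    rw [this]
    have himg : Prod.snd '' ({0} : Set (ℝ × E)) = ({0} : Set E) := by
      ext x; simp [Prod.ext_iff]
    rw [himg, closure_singleton]
    rfl
  refine ⟨ν, hadd, hsmul, ?_, ?_, ?_, hclos⟩
  · -- basis
    have h0 : @nhds (ℝ × E) ν 0 = Filter.comap Prod.snd (nhds (0 : E)) := nhds_induced _ _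
    rw [h0]
    have := Metric.nhds_basis_ball (α := E) (x := 0)
    refine (this.comap Prod.snd).congr (fun ε => Iff.rfl) (fun ε hε => ?_)
    ext p
    simp [Metric.mem_ball, dist_zero_right]
  · -- τ ≤ ν
    rw [hν, ← continuous_iff_le_induced]
    letI := τ
    have hT : Filter.Tendsto (Prod.snd : ℝ × E → E) (@nhds _ τ 0) (nhds (0 : E)) := by
      rw [hτbasis.tendsto_iff (Metric.nhds_basis_ball (α := E) (x := 0))]
      intro ε hε
      refine ⟨ε, hε, fun p hp => ?_⟩
      simp only [Set.mem_setOf_eq] at hp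
      have : ‖p.2‖ < ε := lt_of_le_of_lt (le_add_of_nonneg_left (abs_nonneg _)) hp
      simpa [Metric.mem_ball, dist_zero_right] using this
    exact continuous_of_continuousAt_zero (AddMonoidHom.snd ℝ E) hT
  · -- nearly convex
    intro p hp
    rw [hclos] at hp
    have hp2 : p.2 ≠ 0 := hp
    obtain ⟨g, hg1, hgx⟩ := exists_dual_vector ℝ p.2 (norm_ne_zero_iff.mpr hp2)
    refine ⟨g.toLinearMap.comp (LinearMap.snd ℝ ℝ E), ?_, ?_⟩
    · exact g.continuous.comp hsndCont
    · simp only [LinearMap.coe_comp, Function.comp_apply, LinearMap.snd_apply,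
        ContinuousLinearMap.coe_coe, hgx]
      exact norm_ne_zero_iff.mpr hp2
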